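/- Let k be a field and A = k⟨x₁,…,x_n⟩/I a quadratic algebra, where I is the two-sided ideal generated by a set R of homogeneous quadratic elements Σ_{i,j} r_{ij} x_i x_j (coefficients r_{ij} ∈ k). Let ρ : A → M_n(A) be a k-algebra homomorphism into n×n matrices over A such that for every relation Σ_{i,j} r_{ij} x_i x_j ∈ R and every index k one has Σ_{i,j} r_{ij}( ρ(x_j)_{ik} + x_i δ_{jk} ) = 0 in A. Then: (1) the free left A-module Ω¹ = A^n with standard left basis e₁,…,e_n becomes an A-bimodule under the right action (a e_i)·b := Σ_k (a ρ(b)_{ik}) e_k, i.e. this right action is a well-defined associative right A-action commuting with the left A-action; (2) there exists a k-linear map d : A → Ω¹ with d(1) = 0, d(x_i) = e_i for all i, and d(ab) = (da)·b + a·(db) for all a,b ∈ A, making (Ω¹, d) a first order differential calculus on A; (3) defining ∂_i : A → A by da = Σ_i (∂_i a) e_i, the maps ∂_i satisfy ∂_i(ab) = Σ_j ∂_j(a) ρ(b)_{ji} + a ∂_i(b) for all a,b ∈ A. -/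

import Mathlib

noncomputable section

open FreeAlgebra

/-- The relation presenting a quadratic algebra `A = k⟨x₁,…,xₙ⟩/(R)` where each
element of `R` is determined by a coefficient matrix `c` via `Σ_{i,j} c i j x_i x_j`. -/
def quadRel (k : Type*) [Field k] (n : ℕ) (R : Set (Fin n → Fin n → k)) :
    FreeAlgebra k (Fin n) → FreeAlgebra k (Fin n) → Prop :=
  fun a b => (∃ c ∈ R, a = ∑ i, ∑ j, c i j • (ι k i * ι k j)) ∧ b = 0

/-- The quadratic algebra presented by the coefficient set `R`. -/
abbrev QuadAlg (k : Type*) [Field k] (n : ℕ) (R : Set (Fin n → Fin n → k)) :=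
  RingQuot (quadRel k n R)

/-- The image of the generator `x_i` in the quadratic algebra. -/
def qx (k : Type*) [Field k] (n : ℕ) (R : Set (Fin n → Fin n → k)) (i : Fin n) :
    QuadAlg k n R :=
  RingQuot.mkAlgHom k (quadRel k n R) (ι k i)

/-- The right action of `A` on the free left `A`-module `Ω¹ = Aⁿ` determined by the
matrix-valued algebra map `ρ`: `(e_i)·b = Σ_k ρ(b)_{i k} e_k`. -/
def raAct (k : Type*) [Field k] (n : ℕ) (R : Set (Fin n → Fin n → k))
    (ρ : QuadAlg k n R →ₐ[k] Matrix (Fin n) (Fin n) (QuadAlg k n R))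
    (v : Fin n → QuadAlg k n R) (b : QuadAlg k n R) : Fin n → QuadAlg k n R :=
  fun l => ∑ i, v i * ρ b i l

section Aux

variable (k : Type*) [Field k] (n : ℕ) (R : Set (Fin n → Fin n → k))
  (ρ : QuadAlg k n R →ₐ[k] Matrix (Fin n) (Fin n) (QuadAlg k n R))

theorem raAct_one (v : Fin n → QuadAlg k n R) : raAct k n R ρ v 1 = v := by
  funext l
  simp [raAct, Matrix.one_apply]

theorem raAct_mul (v : Fin n → QuadAlg k n R) (a b : QuadAlg k n R) :
    raAct k n R ρ (raAct k n R ρ v a) b = raAct k n R ρ v (a * b) := by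
  funext l
  simp only [raAct, map_mul, Matrix.mul_apply, Finset.sum_mul, Finset.mul_sum, mul_assoc]
  exact Finset.sum_comm

theorem raAct_lsmul (a : QuadAlg k n R) (v : Fin n → QuadAlg k n R) (b : QuadAlg k n R) :
    raAct k n R ρ (fun i => a * v i) b = fun l => a * raAct k n R ρ v b l := by
  funext l
  simp [raAct, Finset.mul_sum, mul_assoc]

theorem raAct_addv (v w : Fin n → QuadAlg k n R) (b : QuadAlg k n R) :
    raAct k n R ρ (v + w) b = raAct k n R ρ v b + raAct k n R ρ w b := by
  funext l
  simp [raAct, add_mul, Finset.sum_add_distrib]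

theorem raAct_addb (v : Fin n → QuadAlg k n R) (a b : QuadAlg k n R) :
    raAct k n R ρ v (a + b) = raAct k n R ρ v a + raAct k n R ρ v b := by
  funext l
  simp [raAct, mul_add, Finset.sum_add_distrib]

theorem raAct_zerov (b : QuadAlg k n R) : raAct k n R ρ 0 b = 0 := by
  funext l; simp [raAct]

theorem raAct_zerob (v : Fin n → QuadAlg k n R) : raAct k n R ρ v 0 = 0 := by
  funext l; simp [raAct]

theorem raAct_ksmul (c : k) (v : Fin n → QuadAlg k n R) (b : QuadAlg k n R) :
    raAct k n R ρ v (c • b) = c • raAct k n R ρ v b := by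
  funext l
  simp [raAct, map_smul, Finset.smul_sum, mul_smul_comm]

theorem raAct_single (i : Fin n) (b : QuadAlg k n R) (l : Fin n) :
    raAct k n R ρ (Pi.single i 1) b l = ρ b i l := by
  simp [raAct, Pi.single_apply, ite_mul]

/-- Type synonym carrying the bimodule structure. -/
def Omega1 (_ρ : QuadAlg k n R →ₐ[k] Matrix (Fin n) (Fin n) (QuadAlg k n R)) :=
  Fin n → QuadAlg k n R

instance : AddCommGroup (Omega1 k n R ρ) :=
  inferInstanceAs (AddCommGroup (Fin n → QuadAlg k n R))

instance : Module (QuadAlg k n R) (Omega1 k n R ρ) :=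
  inferInstanceAs (Module (QuadAlg k n R) (Fin n → QuadAlg k n R))

instance : Module k (Omega1 k n R ρ) :=
  inferInstanceAs (Module k (Fin n → QuadAlg k n R))

instance : IsScalarTower k (QuadAlg k n R) (Omega1 k n R ρ) :=
  inferInstanceAs (IsScalarTower k (QuadAlg k n R) (Fin n → QuadAlg k n R))

instance : Module (QuadAlg k n R)ᵐᵒᵖ (Omega1 k n R ρ) where
  smul b v := raAct k n R ρ v b.unop
  one_smul v := raAct_one k n R ρ v
  mul_smul x y v := (raAct_mul k n R ρ v y.unop x.unop).symm
  smul_add x v w := raAct_addv k n R ρ v w x.unop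
  smul_zero x := raAct_zerov k n R ρ x.unop
  add_smul x y v := raAct_addb k n R ρ v x.unop y.unop
  zero_smul v := raAct_zerob k n R ρ v

theorem op_smul_def (b : QuadAlg k n R) (v : Omega1 k n R ρ) :
    MulOpposite.op b • v = raAct k n R ρ v b := rfl

instance : SMulCommClass (QuadAlg k n R) (QuadAlg k n R)ᵐᵒᵖ (Omega1 k n R ρ) where
  smul_comm a x v := by
    show a • raAct k n R ρ v x.unop = raAct k n R ρ (a • v) x.unop
    have : (a • v : Omega1 k n R ρ) = fun i => a * v i := rfl
    rw [this]
    exact (raAct_lsmul k n R ρ a v x.unop).symm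

instance : IsScalarTower k (QuadAlg k n R)ᵐᵒᵖ (Omega1 k n R ρ) where
  smul_assoc c x v := by
    show raAct k n R ρ v (c • x).unop = c • raAct k n R ρ v x.unop
    rw [MulOpposite.unop_smul]
    exact raAct_ksmul k n R ρ c v x.unop


instance : Algebra k (TrivSqZeroExt (QuadAlg k n R) (Omega1 k n R ρ)) :=
  TrivSqZeroExt.algebra' k (QuadAlg k n R) (Omega1 k n R ρ)

end Aux

section Aux2

open TrivSqZeroExt

variable (k : Type*) [Field k] (n : ℕ) (R : Set (Fin n → Fin n → k))
  (ρ : QuadAlg k n R →ₐ[k] Matrix (Fin n) (Fin n) (QuadAlg k n R))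

def gphi : FreeAlgebra k (Fin n) →ₐ[k] TrivSqZeroExt (QuadAlg k n R) (Omega1 k n R ρ) :=
  FreeAlgebra.lift k fun i =>
    inl (qx k n R i) + inr (show Omega1 k n R ρ from Pi.single i 1)

theorem gphi_ι (i : Fin n) :
    gphi k n R ρ (ι k i) = inl (qx k n R i) + inr (show Omega1 k n R ρ from Pi.single i 1) :=
  FreeAlgebra.lift_ι_apply _ _

theorem gphi_inr_fst (i : Fin n) :
    (inr (show Omega1 k n R ρ from Pi.single i 1) :
      TrivSqZeroExt (QuadAlg k n R) (Omega1 k n R ρ)).fst = 0 := rfl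

theorem gphi_inr_snd (i : Fin n) :
    (inr (show Omega1 k n R ρ from Pi.single i 1) :
      TrivSqZeroExt (QuadAlg k n R) (Omega1 k n R ρ)).snd =
      (show Omega1 k n R ρ from Pi.single i 1) := rfl

theorem omega_zero_add (v : Fin n → QuadAlg k n R) :
    @HAdd.hAdd (Omega1 k n R ρ) (Omega1 k n R ρ) (Omega1 k n R ρ) _ 0 v = v :=
  zero_add (M := Omega1 k n R ρ) v

theorem gphi_key (hρ : ∀ c ∈ R, ∀ l : Fin n,
      (∑ i, ∑ j, c i j •
        (ρ (qx k n R j) i l + if j = l then qx k n R i else 0)) = 0) :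
    ∀ a b, quadRel k n R a b → gphi k n R ρ a = gphi k n R ρ b := by
  rintro a b ⟨⟨c, hc, rfl⟩, rfl⟩
  rw [map_zero]
  have hq : quadRel k n R (∑ i, ∑ j, c i j • (ι k i * ι k j)) 0 := ⟨⟨c, hc, rfl⟩, rfl⟩
  have hrel := RingQuot.mkAlgHom_rel (S := k) hq
  rw [map_zero] at hrel
  apply TrivSqZeroExt.ext
  · simp only [map_sum, map_smul, map_mul, gphi_ι, fst_sum, fst_smul, fst_mul, fst_add,
      fst_inl, fst_inr, fst_zero, add_zero, gphi_inr_fst]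
    calc (∑ i, ∑ j, c i j • (qx k n R i * qx k n R j))
        = RingQuot.mkAlgHom k (quadRel k n R) (∑ i, ∑ j, c i j • (ι k i * ι k j)) := by
          simp [qx, map_sum, map_smul, map_mul]
      _ = 0 := hrel
  · simp only [map_sum, map_smul, map_mul, gphi_ι, snd_sum, snd_smul, snd_mul, fst_add,
      snd_add, fst_inl, fst_inr, snd_inl, snd_inr, add_zero, zero_add, snd_zero,
      gphi_inr_fst, gphi_inr_snd, omega_zero_add]
    show (∑ i, ∑ j, c i j • (qx k n R i • (Pi.single j 1 : Fin n → QuadAlg k n R)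
        + raAct k n R ρ (Pi.single i 1) (qx k n R j))) = 0
    funext l
    simp only [Finset.sum_apply, Pi.smul_apply, Pi.add_apply, Pi.zero_apply]
    rw [← hρ c hc l]
    refine Finset.sum_congr rfl fun i _ => Finset.sum_congr rfl fun j _ => ?_
    rw [raAct_single]
    congr 1
    rw [add_comm]
    congr 1
    by_cases hjl : j = l
    · subst hjl; simp
    · simp [Pi.single_eq_of_ne (Ne.symm hjl), hjl]

end Aux2

section Aux3

open TrivSqZeroExt

variable (k : Type*) [Field k] (n : ℕ) (R : Set (Fin n → Fin n → k))
  (ρ : QuadAlg k n R →ₐ[k] Matrix (Fin n) (Fin n) (QuadAlg k n R))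
  (hρ : ∀ c ∈ R, ∀ l : Fin n,
      (∑ i, ∑ j, c i j •
        (ρ (qx k n R j) i l + if j = l then qx k n R i else 0)) = 0)

def psi : QuadAlg k n R →ₐ[k] TrivSqZeroExt (QuadAlg k n R) (Omega1 k n R ρ) :=
  RingQuot.liftAlgHom k ⟨gphi k n R ρ, gphi_key k n R ρ hρ⟩

theorem psi_mk (x : FreeAlgebra k (Fin n)) :
    psi k n R ρ hρ (RingQuot.mkAlgHom k (quadRel k n R) x) = gphi k n R ρ x :=
  RingQuot.liftAlgHom_mkAlgHom_apply _ _ _ _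

theorem fst_psi (a : QuadAlg k n R) : (psi k n R ρ hρ a).fst = a := by
  obtain ⟨x, rfl⟩ := RingQuot.mkAlgHom_surjective k (quadRel k n R) a
  rw [psi_mk]
  have h : (fstHom k (QuadAlg k n R) (Omega1 k n R ρ)).comp (gphi k n R ρ) =
      RingQuot.mkAlgHom k (quadRel k n R) := by
    apply FreeAlgebra.hom_ext
    funext i
    simp [gphi_ι, qx, gphi_inr_fst]
  exact DFunLike.congr_fun h x

def dmap : QuadAlg k n R →ₗ[k] (Fin n → QuadAlg k n R) where
  toFun a := (psi k n R ρ hρ a).snd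
  map_add' a b := by
    show (psi k n R ρ hρ (a + b)).snd = (psi k n R ρ hρ a).snd + (psi k n R ρ hρ b).snd
    rw [map_add]; rfl
  map_smul' c a := by
    show (psi k n R ρ hρ (c • a)).snd = c • (psi k n R ρ hρ a).snd
    rw [map_smul]; rfl

theorem dmap_one : dmap k n R ρ hρ 1 = 0 := by
  show (psi k n R ρ hρ 1).snd = 0
  rw [map_one]
  rfl

theorem dmap_qx (i : Fin n) : dmap k n R ρ hρ (qx k n R i) = Pi.single i 1 := by
  show (psi k n R ρ hρ (RingQuot.mkAlgHom k (quadRel k n R) (ι k i))).snd = _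
  rw [psi_mk, gphi_ι]
  show (0 : Fin n → QuadAlg k n R) + Pi.single i 1 = Pi.single i 1
  exact zero_add _

theorem dmap_mul (a b : QuadAlg k n R) :
    dmap k n R ρ hρ (a * b) =
      raAct k n R ρ (dmap k n R ρ hρ a) b + fun i => a * dmap k n R ρ hρ b i := by
  show (psi k n R ρ hρ (a * b)).snd = _
  rw [map_mul, TrivSqZeroExt.snd_mul, fst_psi, fst_psi]
  exact add_comm _ _

end Aux3

/-- given a quadratic algebra `A = k⟨x₁,…,xₙ⟩/(R)` and an algebra map
`ρ : A → Mₙ(A)` with `Σ_{i,j} r_{ij}(ρ(x_j)_{ik} + x_i δ_{jk}) = 0` for each relation,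
(1) `Ω¹ = Aⁿ` is an `A`-bimodule for the right action `(a e_i)·b = Σ_k a ρ(b)_{ik} e_k`;
(2) there is a first order differential calculus `d : A → Ω¹` with `d 1 = 0`,
`d x_i = e_i` and the Leibniz rule; (3) the partial derivatives `∂_i a = (d a)_i`
satisfy the twisted derivation rule. -/
theorem stmt_7 (k : Type*) [Field k] (n : ℕ) (R : Set (Fin n → Fin n → k))
    (ρ : QuadAlg k n R →ₐ[k] Matrix (Fin n) (Fin n) (QuadAlg k n R))
    (hρ : ∀ c ∈ R, ∀ l : Fin n,
      (∑ i, ∑ j, c i j •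
        (ρ (qx k n R j) i l + if j = l then qx k n R i else 0)) = 0) :
    -- (1) the right action makes the free left module `Aⁿ` an `A`-bimodule
    (∀ v : Fin n → QuadAlg k n R, raAct k n R ρ v 1 = v) ∧
    (∀ (v : Fin n → QuadAlg k n R) (a b : QuadAlg k n R),
      raAct k n R ρ (raAct k n R ρ v a) b = raAct k n R ρ v (a * b)) ∧
    (∀ (a : QuadAlg k n R) (v : Fin n → QuadAlg k n R) (b : QuadAlg k n R),
      raAct k n R ρ (fun i => a * v i) b = fun l => a * raAct k n R ρ v b l) ∧
    -- (2) and (3): existence of the differential and the partial derivatives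
    (∃ d : QuadAlg k n R →ₗ[k] (Fin n → QuadAlg k n R),
      d 1 = 0 ∧
      (∀ i : Fin n, d (qx k n R i) = Pi.single i 1) ∧
      (∀ a b : QuadAlg k n R,
        d (a * b) = raAct k n R ρ (d a) b + fun i => a * d b i) ∧
      Submodule.span k
        {w : Fin n → QuadAlg k n R |
          ∃ a b : QuadAlg k n R, w = fun i => a * d b i} = ⊤ ∧
      (∀ (a b : QuadAlg k n R) (i : Fin n),
        d (a * b) i = (∑ j, d a j * ρ b j i) + a * d b i)) := by
  refine ⟨raAct_one k n R ρ, raAct_mul k n R ρ, raAct_lsmul k n R ρ,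
    dmap k n R ρ hρ, dmap_one k n R ρ hρ, dmap_qx k n R ρ hρ, dmap_mul k n R ρ hρ,
    ?_, ?_⟩
  · rw [eq_top_iff]
    rintro w -
    have hw : w = ∑ j, Pi.single j (w j) := (Finset.univ_sum_single w).symm
    rw [hw]
    refine Submodule.sum_mem _ fun j _ => Submodule.subset_span ⟨w j, qx k n R j, ?_⟩
    funext i
    rw [dmap_qx k n R ρ hρ j]
    by_cases hij : i = j
    · subst hij; simp
    · simp [Pi.single_eq_of_ne hij]
  · intro a b i
    exact congrFun (dmap_mul k n R ρ hρ a b) i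

end
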